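/- Let 2 ≤ ℓ ≤ m and 0 ≤ p ≠ q < 2^m with |φ(p) - φ(q)| < 2^{-ℓ+1}, where φ(n) = Σ n_i 2^{-i} for the binary digits n_i of n (n = Σ n_i 2^{i-1}). Then the XOR vector (p ⊕ q) restricted to digit positions 1 through ℓ-1 is either all zeros, all ones, or of the form (0,...,0,1,...,1) (a block of zeros followed by a block of ones). -/

import Mathlib

open Finset

/-- The `i`-th binary digit of `n` (1-indexed: `n = Σ nᵢ 2^(i-1)`). -/
def bit (n i : ℕ) : ℕ := if Nat.testBit n (i-1) then 1 else 0

/-- `φ` of the digit vector of `n` truncated to `m` digits: `Σ nᵢ 2^(-i)`. -/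
noncomputable def phi (m n : ℕ) : ℝ :=
  ∑ i ∈ Finset.Icc 1 m, (bit n i : ℝ) * (2:ℝ) ^ (-(i:ℤ))

/-- The `i`-th coordinate of `P_m · (digit vector of n)` over `F₂`, where
`P_m[i][j] = C(j-1, i-1) mod 2` is the upper-triangular Pascal matrix. -/
def pbit (m n i : ℕ) : ℕ :=
  (∑ j ∈ Finset.Icc 1 m, (Nat.choose (j-1) (i-1) % 2) * bit n j) % 2

/-- `φ(P_m · n)`. -/
noncomputable def phiP (m n : ℕ) : ℝ :=
  ∑ i ∈ Finset.Icc 1 m, (pbit m n i : ℝ) * (2:ℝ) ^ (-(i:ℤ))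

/-- The `n`-th point of the two-dimensional Sobol' sequence (with `n < 2^m`). -/
noncomputable def sobol (m n : ℕ) : ℝ × ℝ := (phi m n, phiP m n)

/-- ℓ^∞ distance on ℝ². -/
noncomputable def linf (a b : ℝ × ℝ) : ℝ := max |a.1 - b.1| |a.2 - b.2|

/-- ℓ^∞ separation radius of the first `N` Sobol' points (digit length `m`). -/
noncomputable def sep (m N : ℕ) : ℝ :=
  (1/2) * sInf {d : ℝ | ∃ p q : ℕ, p < N ∧ q < N ∧ p ≠ q ∧ d = linf (sobol m p) (sobol m q)}

/-- ℓ^∞ covering radius of the first `N` Sobol' points (digit length `m`). -/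
noncomputable def cov (m N : ℕ) : ℝ :=
  sSup {r : ℝ | ∃ x : ℝ × ℝ, x.1 ∈ Set.Icc (0:ℝ) 1 ∧ x.2 ∈ Set.Icc (0:ℝ) 1 ∧
    r = sInf {d : ℝ | ∃ n : ℕ, n < N ∧ d = linf x (sobol m n)}}

lemma bit_le_one (n i : ℕ) : bit n i ≤ 1 := by unfold bit; split <;> simp

lemma bit_eq_or (n i : ℕ) : bit n i = 0 ∨ bit n i = 1 := by unfold bit; split <;> simp

lemma bit_xor_zero {p q i : ℕ} (h : bit (p ^^^ q) i = 0) : bit p i = bit q i := by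
  unfold bit at *
  rw [Nat.testBit_xor] at h
  cases hp : Nat.testBit p (i-1) <;> cases hq : Nat.testBit q (i-1) <;>
    simp_all

lemma geo (a : ℕ) : ∀ b, a ≤ b →
    ∑ i ∈ Icc (a+1) b, (2:ℝ)^(-(i:ℤ)) = (2:ℝ)^(-(a:ℤ)) - (2:ℝ)^(-(b:ℤ)) := by
  refine Nat.le_induction ?_ ?_
  · simp [Finset.Icc_eq_empty_of_lt (Nat.lt_succ_self a)]
  · intro n hn ih
    rw [Finset.sum_Icc_succ_top (by omega : a+1 ≤ n+1), ih]
    have h2 : (2:ℝ) ^ (-((n:ℤ)+1)) = (2:ℝ)^(-(n:ℤ)) / 2 := by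
      rw [neg_add, zpow_add₀ (two_ne_zero), zpow_neg_one]
      ring
    push_cast
    rw [h2]
    ring

lemma key (ℓ m p q k j : ℕ) (hℓ : 2 ≤ ℓ) (hℓm : ℓ ≤ m)
    (hk1 : 1 ≤ k) (hkj : k < j) (hj : j ≤ ℓ - 1)
    (hlow : ∀ i, 1 ≤ i → i < k → bit p i = bit q i)
    (hpk : bit p k = 0) (hqk : bit q k = 1) (hbj : bit p j = bit q j)
    (h1 : |phi m q - phi m p| < (2:ℝ) ^ (-(ℓ:ℤ) + 1)) : False := by
  set w : ℕ → ℝ := fun i => (2:ℝ)^(-(i:ℤ)) with hw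
  have hwpos : ∀ i, 0 < w i := fun i => zpow_pos two_pos _
  have hkm : k ≤ m := by omega
  have hjm : j ≤ m := by omega
  have hd : phi m q - phi m p = ∑ i ∈ Icc 1 m, ((bit q i : ℝ) - bit p i) * w i := by
    unfold phi
    rw [← Finset.sum_sub_distrib]
    exact Finset.sum_congr rfl (fun i _ => by ring)
  set f : ℕ → ℝ := fun i => ((bit q i : ℝ) - bit p i) * w i + (if k < i then w i else 0)
    with hfdef
  have hf0 : ∀ i ∈ Icc 1 m, 0 ≤ f i := by
    intro i hi
    rw [Finset.mem_Icc] at hi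
    by_cases hik : k < i
    · have : f i = ((bit q i : ℝ) - bit p i + 1) * w i := by simp [hfdef, hik]; ring
      rw [this]
      apply mul_nonneg _ (hwpos i).le
      have h1 : (bit p i : ℝ) ≤ 1 := by exact_mod_cast bit_le_one p i
      have h2 : (0:ℝ) ≤ bit q i := Nat.cast_nonneg _
      linarith
    · rcases eq_or_lt_of_le (Nat.not_lt.mp hik) with h | h
      · have : f i = w i := by simp [hfdef, hik, h, hpk, hqk]
        rw [this]; exact (hwpos i).le
      · have := hlow i hi.1 h
        simp [hfdef, hik, this]
  have hpair : w k + w j ≤ ∑ i ∈ Icc 1 m, f i := by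
    have hsub : ({k, j} : Finset ℕ) ⊆ Icc 1 m := by
      intro x hx
      simp only [Finset.mem_insert, Finset.mem_singleton] at hx
      rw [Finset.mem_Icc]
      rcases hx with rfl | rfl <;> omega
    have := Finset.sum_le_sum_of_subset_of_nonneg hsub
      (fun i hi _ => hf0 i hi)
    rw [Finset.sum_pair hkj.ne] at this
    have hfk : f k = w k := by simp [hfdef, lt_irrefl, hpk, hqk]
    have hfj : f j = w j := by simp [hfdef, hkj, hbj]
    rw [hfk, hfj] at this
    exact this
  have hsplit : ∑ i ∈ Icc 1 m, f i
      = (phi m q - phi m p) + ∑ i ∈ Icc (k+1) m, w i := by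
    have hfilter : (Icc 1 m).filter (fun i => k < i) = Icc (k+1) m := by
      ext i
      simp only [Finset.mem_filter, Finset.mem_Icc]
      omega
    simp only [hfdef]
    rw [Finset.sum_add_distrib, ← Finset.sum_filter, hfilter, hd]
  have hgeo : ∑ i ∈ Icc (k+1) m, w i = w k - w m := geo k m hkm
  have hlb : w j ≤ phi m q - phi m p := by
    rw [hsplit, hgeo] at hpair
    have := (hwpos m).le
    linarith
  have hwj : (2:ℝ) ^ (-(ℓ:ℤ) + 1) ≤ w j := by
    apply zpow_le_zpow_right₀ one_le_two
    omega
  have := le_abs_self (phi m q - phi m p)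
  linarith

theorem stmt_9 (ℓ m p q : ℕ) (hℓ : 2 ≤ ℓ) (hℓm : ℓ ≤ m)
    (hp : p < 2 ^ m) (hq : q < 2 ^ m) (hpq : p ≠ q)
    (h1 : |phi m q - phi m p| < (2:ℝ) ^ (-(ℓ:ℤ) + 1)) :
    (∀ i ∈ Finset.Icc 1 (ℓ - 1), bit (p ^^^ q) i = 0) ∨
    (∀ i ∈ Finset.Icc 1 (ℓ - 1), bit (p ^^^ q) i = 1) ∨
    (∃ k, 2 ≤ k ∧ k ≤ ℓ - 1 ∧
      (∀ i ∈ Finset.Icc 1 (k - 1), bit (p ^^^ q) i = 0) ∧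
      (∀ i ∈ Finset.Icc k (ℓ - 1), bit (p ^^^ q) i = 1)) := by
  by_cases h0 : ∀ i ∈ Finset.Icc 1 (ℓ - 1), bit (p ^^^ q) i = 0
  · exact Or.inl h0
  push_neg at h0
  obtain ⟨i0, hi0, hne0⟩ := h0
  have hP : ∃ i, i ∈ Finset.Icc 1 (ℓ - 1) ∧ bit (p ^^^ q) i = 1 := by
    refine ⟨i0, hi0, ?_⟩
    rcases bit_eq_or (p ^^^ q) i0 with h | h
    · exact absurd h hne0
    · exact h
  classical
  set k := Nat.find hP with hkdef
  obtain ⟨hkmem, hkbit⟩ := Nat.find_spec hP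
  rw [Finset.mem_Icc] at hkmem
  have hmin : ∀ i, i < k → ¬ (i ∈ Finset.Icc 1 (ℓ - 1) ∧ bit (p ^^^ q) i = 1) :=
    fun i hi => Nat.find_min hP hi
  have hzero : ∀ i, 1 ≤ i → i < k → bit (p ^^^ q) i = 0 := by
    intro i h1i hik
    have hmem : i ∈ Finset.Icc 1 (ℓ - 1) := by rw [Finset.mem_Icc]; omega
    rcases bit_eq_or (p ^^^ q) i with h | h
    · exact h
    · exact absurd ⟨hmem, h⟩ (hmin i hik)
  by_cases h1c : ∀ i ∈ Finset.Icc k (ℓ - 1), bit (p ^^^ q) i = 1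
  · by_cases hk1 : k = 1
    · refine Or.inr (Or.inl ?_)
      intro i hi
      exact h1c i (by rw [Finset.mem_Icc] at *; omega)
    · refine Or.inr (Or.inr ⟨k, by omega, hkmem.2, ?_, h1c⟩)
      intro i hi
      rw [Finset.mem_Icc] at hi
      exact hzero i hi.1 (by omega)
  push_neg at h1c
  obtain ⟨j, hj, hjne⟩ := h1c
  rw [Finset.mem_Icc] at hj
  have hjbit : bit (p ^^^ q) j = 0 := by
    rcases bit_eq_or (p ^^^ q) j with h | h
    · exact h
    · exact absurd h hjne
  have hkj : k < j := by
    rcases Nat.lt_or_ge k j with h | h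
    · exact h
    · have : j = k := by omega
      rw [this, hkbit] at hjbit; omega
  exfalso
  have hlow : ∀ i, 1 ≤ i → i < k → bit p i = bit q i :=
    fun i h1i hik => bit_xor_zero (hzero i h1i hik)
  have hbj : bit p j = bit q j := bit_xor_zero hjbit
  have hdiff : Nat.testBit (p ^^^ q) (k - 1) = true := by
    unfold bit at hkbit
    by_contra h
    simp only [Bool.not_eq_true] at h
    split at hkbit
    · rename_i hc; exact absurd (hc.symm.trans h) (by simp)
    · simp at hkbit
  rw [Nat.testBit_xor] at hdiff
  cases hpk : Nat.testBit p (k-1)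
  · have hqk : Nat.testBit q (k-1) = true := by
      rw [hpk] at hdiff; simpa using hdiff
    exact key ℓ m p q k j hℓ hℓm hkmem.1 hkj hj.2 hlow
      (by simp [bit, hpk]) (by simp [bit, hqk]) hbj h1
  · have hqk : Nat.testBit q (k-1) = false := by
      rw [hpk] at hdiff
      cases h : Nat.testBit q (k-1)
      · rfl
      · rw [h] at hdiff; simp at hdiff
    exact key ℓ m q p k j hℓ hℓm hkmem.1 hkj hj.2
      (fun i a b => (hlow i a b).symm)
      (by simp [bit, hqk]) (by simp [bit, hpk]) hbj.symm
      (by rwa [abs_sub_comm])
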